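/- Suppose ξ : S → ℝ satisfies ξ_s > 0 for all s ∈ S, and λ ≥ 0 is such that Σ_{s'∈S} p(s'|s,a) ξ_{s'} ≤ λ ξ_s for all s ∈ S and a ∈ A, with γλ < 1. Then the soft Bellman operator T has a unique fixed point Λ*_β : S×A → ℝ (i.e., Λ*_β = TΛ*_β), and for every Λ_0 : S×A → ℝ and every n ∈ ℕ, ‖T^n Λ_0 − Λ*_β‖_ξ ≤ (γλ)^n ‖Λ_0 − Λ*_β‖_ξ; in particular the fixed-point iterates T^n Λ_0 converge to Λ*_β. -/

import Mathlib

/-- The soft Bellman operator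
`[TΛ](s,a) = Σ_{s'} p(s'|s,a)(c(s,a,s') + (γ/β) log p(s'|s,a))
  − (γ²/β) Σ_{s'} p(s'|s,a) log Σ_{a'} exp(−(β/γ)Λ(s',a'))`. -/
noncomputable def softBellman {S A : Type*} [Fintype S] [Fintype A]
    (p : S → A → S → ℝ) (c : S → A → S → ℝ) (β γ : ℝ)
    (Λ : S → A → ℝ) : S → A → ℝ :=
  fun s a =>
    (∑ s', p s a s' * (c s a s' + (γ / β) * Real.log (p s a s'))) -
      (γ ^ 2 / β) * ∑ s', p s a s' * Real.log (∑ a', Real.exp (-(β / γ) * Λ s' a'))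

/-- Weighted maximum norm `‖X‖_ξ = max_{s,a} |X(s,a)| / ξ(s)`. -/
noncomputable def wnorm {S A : Type*} [Fintype S] [Fintype A] [Nonempty S] [Nonempty A]
    (ξ : S → ℝ) (X : S → A → ℝ) : ℝ :=
  Finset.univ.sup' Finset.univ_nonempty (fun sa : S × A => |X sa.1 sa.2| / ξ sa.1)

/-- Under the weighted-norm contraction conditions, the soft Bellman operator has a
unique fixed point `Λ*`, and the fixed-point iterates `T^n Λ₀` converge to it at
geometric rate `(γλ)^n` in `‖·‖_ξ`. -/
private lemma logsumexp_lip {A : Type*} [Fintype A] [Nonempty A]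
    (u v : A → ℝ) (M : ℝ) (h : ∀ a, |u a - v a| ≤ M) :
    |Real.log (∑ a, Real.exp (u a)) - Real.log (∑ a, Real.exp (v a))| ≤ M := by
  have hpos : ∀ w : A → ℝ, 0 < ∑ a, Real.exp (w a) := fun w =>
    Finset.sum_pos (fun a _ => Real.exp_pos _) Finset.univ_nonempty
  have key : ∀ u v : A → ℝ, (∀ a, u a - v a ≤ M) →
      Real.log (∑ a, Real.exp (u a)) - Real.log (∑ a, Real.exp (v a)) ≤ M := by
    intro u v h
    have h1 : (∑ a, Real.exp (u a)) ≤ Real.exp M * ∑ a, Real.exp (v a) := by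
      rw [Finset.mul_sum]
      refine Finset.sum_le_sum fun a _ => ?_
      rw [← Real.exp_add]
      exact Real.exp_le_exp.mpr (by linarith [h a])
    have h2 := Real.log_le_log (hpos u) h1
    rw [Real.log_mul (Real.exp_ne_zero M) (ne_of_gt (hpos v)), Real.log_exp] at h2
    linarith
  rw [abs_sub_le_iff]
  exact ⟨key u v fun a => (abs_le.mp (h a)).2,
         key v u fun a => by linarith [(abs_le.mp (h a)).1]⟩

private lemma softBellman_core {S A : Type*} [Fintype S] [Fintype A] [Nonempty S] [Nonempty A]
    (p : S → A → S → ℝ) (c : S → A → S → ℝ) (β γ : ℝ)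
    (hp0 : ∀ s a s', 0 ≤ p s a s')
    (hβ : 0 < β) (hγ0 : 0 < γ)
    (ξ : S → ℝ) (hξ : ∀ s, 0 < ξ s)
    (lam : ℝ)
    (hlam : ∀ s a, ∑ s', p s a s' * ξ s' ≤ lam * ξ s)
    (Λ1 Λ2 : S → A → ℝ) (W : ℝ) (hW0 : 0 ≤ W)
    (hW : ∀ s a, |Λ1 s a - Λ2 s a| ≤ W * ξ s) (s : S) (a : A) :
    |softBellman p c β γ Λ1 s a - softBellman p c β γ Λ2 s a| ≤ γ * lam * W * ξ s := by
  set L : (S → A → ℝ) → S → ℝ :=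
    fun Λ s' => Real.log (∑ a', Real.exp (-(β / γ) * Λ s' a')) with hL
  have hβγ : 0 < β / γ := div_pos hβ hγ0
  have hLs : ∀ s', |L Λ2 s' - L Λ1 s'| ≤ (β / γ) * (W * ξ s') := by
    intro s'
    refine logsumexp_lip _ _ _ fun a' => ?_
    have : -(β / γ) * Λ2 s' a' - -(β / γ) * Λ1 s' a' = (β / γ) * (Λ1 s' a' - Λ2 s' a') := by ring
    rw [this, abs_mul, abs_of_pos hβγ]
    exact mul_le_mul_of_nonneg_left (hW s' a') hβγ.le
  have hdiff : softBellman p c β γ Λ1 s a - softBellman p c β γ Λ2 s a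
      = (γ ^ 2 / β) * ∑ s', p s a s' * (L Λ2 s' - L Λ1 s') := by
    have : (∑ s', p s a s' * (L Λ2 s' - L Λ1 s'))
        = (∑ s', p s a s' * L Λ2 s') - ∑ s', p s a s' * L Λ1 s' := by
      rw [← Finset.sum_sub_distrib]
      exact Finset.sum_congr rfl fun _ _ => by ring
    rw [this]; unfold softBellman; ring
  rw [hdiff, abs_mul, abs_of_pos (by positivity : (0:ℝ) < γ ^ 2 / β)]
  have h1 : |∑ s', p s a s' * (L Λ2 s' - L Λ1 s')| ≤ (β / γ) * W * (lam * ξ s) := by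
    calc |∑ s', p s a s' * (L Λ2 s' - L Λ1 s')|
        ≤ ∑ s', |p s a s' * (L Λ2 s' - L Λ1 s')| := Finset.abs_sum_le_sum_abs _ _
      _ ≤ ∑ s', p s a s' * ((β / γ) * (W * ξ s')) := by
          refine Finset.sum_le_sum fun s' _ => ?_
          rw [abs_mul, abs_of_nonneg (hp0 s a s')]
          exact mul_le_mul_of_nonneg_left (hLs s') (hp0 s a s')
      _ = (β / γ) * W * ∑ s', p s a s' * ξ s' := by
          rw [Finset.mul_sum]; exact Finset.sum_congr rfl fun _ _ => by ring
      _ ≤ (β / γ) * W * (lam * ξ s) := by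
          refine mul_le_mul_of_nonneg_left (hlam s a) (by positivity)
  calc γ ^ 2 / β * |∑ s', p s a s' * (L Λ2 s' - L Λ1 s')|
      ≤ γ ^ 2 / β * ((β / γ) * W * (lam * ξ s)) :=
        mul_le_mul_of_nonneg_left h1 (by positivity)
    _ = γ * lam * W * ξ s := by field_simp

private lemma wnorm_nonneg' {S A : Type*} [Fintype S] [Fintype A] [Nonempty S] [Nonempty A]
    (ξ : S → ℝ) (hξ : ∀ s, 0 < ξ s) (Z : S → A → ℝ) : 0 ≤ wnorm ξ Z := by
  obtain ⟨sa⟩ : Nonempty (S × A) := inferInstance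
  exact le_trans (div_nonneg (abs_nonneg (Z sa.1 sa.2)) (hξ sa.1).le)
    (Finset.le_sup' (fun sa : S × A => |Z sa.1 sa.2| / ξ sa.1) (Finset.mem_univ sa))

theorem softBellman_unique_fixedPoint_and_convergence
    {S A : Type*} [Fintype S] [Fintype A] [Nonempty S] [Nonempty A]
    (p : S → A → S → ℝ) (c : S → A → S → ℝ) (β γ : ℝ)
    (hp0 : ∀ s a s', 0 ≤ p s a s') (hp1 : ∀ s a, ∑ s', p s a s' = 1)
    (hβ : 0 < β) (hγ0 : 0 < γ) (hγ1 : γ ≤ 1)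
    (ξ : S → ℝ) (hξ : ∀ s, 0 < ξ s)
    (lam : ℝ) (hlam0 : 0 ≤ lam)
    (hlam : ∀ s a, ∑ s', p s a s' * ξ s' ≤ lam * ξ s)
    (hcontr : γ * lam < 1) :
    ∃ Λstar : S → A → ℝ,
      softBellman p c β γ Λstar = Λstar ∧
      (∀ Λ' : S → A → ℝ, softBellman p c β γ Λ' = Λ' → Λ' = Λstar) ∧
      (∀ (Λ0 : S → A → ℝ) (n : ℕ),
        wnorm ξ (fun s a => (softBellman p c β γ)^[n] Λ0 s a - Λstar s a) ≤
          (γ * lam) ^ n * wnorm ξ (fun s a => Λ0 s a - Λstar s a)) ∧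
      (∀ Λ0 : S → A → ℝ,
        Filter.Tendsto
          (fun n => wnorm ξ (fun s a => (softBellman p c β γ)^[n] Λ0 s a - Λstar s a))
          Filter.atTop (nhds 0)) := by
  set T : (S → A → ℝ) → (S → A → ℝ) := softBellman p c β γ with hT
  set q : ℝ := γ * lam with hq
  have hq0 : 0 ≤ q := mul_nonneg hγ0.le hlam0
  set Φ : (S → A → ℝ) → (S → A → ℝ) := fun X s a => X s a / ξ s with hΦ
  set Ψ : (S → A → ℝ) → (S → A → ℝ) := fun Y s a => Y s a * ξ s with hΨ
  have hΦΨ : ∀ Y, Φ (Ψ Y) = Y := fun Y => by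
    funext s a; exact mul_div_cancel_right₀ _ (hξ s).ne'
  have hΨΦ : ∀ X, Ψ (Φ X) = X := fun X => by
    funext s a; exact div_mul_cancel₀ _ (hξ s).ne'
  set T' : (S → A → ℝ) → (S → A → ℝ) := fun Y => Φ (T (Ψ Y)) with hT'
  -- pointwise bounds from dist
  have hptw : ∀ (x y : S → A → ℝ) (s : S) (a : A), |x s a - y s a| ≤ dist x y := by
    intro x y s a
    rw [← Real.dist_eq]
    exact (dist_le_pi_dist (x s) (y s) a).trans (dist_le_pi_dist x y s)
  -- contraction of T'
  have hlip : ∀ x y : S → A → ℝ, dist (T' x) (T' y) ≤ q * dist x y := by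
    intro x y
    have hd0 : (0:ℝ) ≤ dist x y := dist_nonneg
    rw [dist_pi_le_iff (by positivity)]
    intro s
    rw [dist_pi_le_iff (by positivity)]
    intro a
    have hb : ∀ s' a', |Ψ x s' a' - Ψ y s' a'| ≤ dist x y * ξ s' := by
      intro s' a'
      have : Ψ x s' a' - Ψ y s' a' = (x s' a' - y s' a') * ξ s' := by simp [hΨ]; ring
      rw [this, abs_mul, abs_of_pos (hξ s')]
      exact mul_le_mul_of_nonneg_right (hptw x y s' a') (hξ s').le
    have hcore := softBellman_core p c β γ hp0 hβ hγ0 ξ hξ lam hlam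
      (Ψ x) (Ψ y) (dist x y) hd0 hb s a
    rw [Real.dist_eq]
    have : Φ (T (Ψ x)) s a - Φ (T (Ψ y)) s a = (T (Ψ x) s a - T (Ψ y) s a) / ξ s := by
      simp [hΦ]; ring
    show |Φ (T (Ψ x)) s a - Φ (T (Ψ y)) s a| ≤ q * dist x y
    rw [this, abs_div, abs_of_pos (hξ s), div_le_iff₀ (hξ s)]
    calc |T (Ψ x) s a - T (Ψ y) s a| ≤ γ * lam * dist x y * ξ s := hcore
      _ = q * dist x y * ξ s := by rw [hq]
  set K : NNReal := ⟨q, hq0⟩ with hK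
  have hCW : ContractingWith K T' := by
    constructor
    · exact_mod_cast hcontr
    · exact LipschitzWith.of_dist_le_mul fun x y => hlip x y
  set Ystar : S → A → ℝ := hCW.fixedPoint T' with hYs
  have hfixpt : Function.IsFixedPt T' Ystar := hCW.fixedPoint_isFixedPt
  have hfix : T' Ystar = Ystar := hfixpt
  refine ⟨Ψ Ystar, ?_, ?_, ?_, ?_⟩
  · -- fixed point
    calc T (Ψ Ystar) = Ψ (Φ (T (Ψ Ystar))) := (hΨΦ _).symm
      _ = Ψ (T' Ystar) := rfl
      _ = Ψ Ystar := by rw [hfix]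
  · -- uniqueness
    intro Λ' hΛ'
    have : T' (Φ Λ') = Φ Λ' := by
      show Φ (T (Ψ (Φ Λ'))) = Φ Λ'
      rw [hΨΦ, hΛ']
    have h2 : Φ Λ' = Ystar := hCW.fixedPoint_unique this
    calc Λ' = Ψ (Φ Λ') := (hΨΦ _).symm
      _ = Ψ Ystar := by rw [h2]
  all_goals {
    -- common facts
    have hcomm : ∀ (n : ℕ) (X : S → A → ℝ), T'^[n] (Φ X) = Φ (T^[n] X) := by
      intro n
      induction n with
      | zero => intro X; simp
      | succ n ih =>
        intro X
        rw [Function.iterate_succ_apply, Function.iterate_succ_apply]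
        rw [show T' (Φ X) = Φ (T X) from by show Φ (T (Ψ (Φ X))) = _; rw [hΨΦ]]
        exact ih (T X)
    have hwd : ∀ X Y : S → A → ℝ,
        wnorm ξ (fun s a => X s a - Y s a) = dist (Φ X) (Φ Y) := by
      intro X Y
      have hw0 : ∀ Z : S → A → ℝ, 0 ≤ wnorm ξ Z := wnorm_nonneg' ξ hξ
      refine le_antisymm ?_ ?_
      · refine Finset.sup'_le _ _ fun sa _ => ?_
        have : |X sa.1 sa.2 - Y sa.1 sa.2| / ξ sa.1 = |Φ X sa.1 sa.2 - Φ Y sa.1 sa.2| := by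
          rw [show Φ X sa.1 sa.2 - Φ Y sa.1 sa.2 = (X sa.1 sa.2 - Y sa.1 sa.2) / ξ sa.1 from
            div_sub_div_same _ _ _, abs_div, abs_of_pos (hξ sa.1)]
        rw [this, ← Real.dist_eq]
        exact hptw (Φ X) (Φ Y) sa.1 sa.2
      · rw [dist_pi_le_iff (hw0 _)]
        intro s
        rw [dist_pi_le_iff (hw0 _)]
        intro a
        rw [Real.dist_eq, show Φ X s a - Φ Y s a = (X s a - Y s a) / ξ s from
          div_sub_div_same _ _ _, abs_div, abs_of_pos (hξ s)]
        exact Finset.le_sup' (fun sa : S × A => |X sa.1 sa.2 - Y sa.1 sa.2| / ξ sa.1)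
          (Finset.mem_univ (s, a))
    have hΦΨY : Φ (Ψ Ystar) = Ystar := hΦΨ _
    have hbound : ∀ (Λ0 : S → A → ℝ) (n : ℕ),
        wnorm ξ (fun s a => T^[n] Λ0 s a - Ψ Ystar s a) ≤
          q ^ n * wnorm ξ (fun s a => Λ0 s a - Ψ Ystar s a) := by
      intro Λ0 n
      rw [hwd, hwd, ← hcomm n Λ0, hΦΨY]
      have hfixn : T'^[n] Ystar = Ystar := hfixpt.iterate n
      calc dist (T'^[n] (Φ Λ0)) Ystar = dist (T'^[n] (Φ Λ0)) (T'^[n] Ystar) := by rw [hfixn]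
        _ ≤ (K ^ n : NNReal) * dist (Φ Λ0) Ystar := (hCW.toLipschitzWith.iterate n).dist_le_mul _ _
        _ = q ^ n * dist (Φ Λ0) Ystar := by rw [NNReal.coe_pow]; rfl
    first
    | exact hbound
    | { intro Λ0
        have hw0 : ∀ n, 0 ≤ wnorm ξ (fun s a => T^[n] Λ0 s a - Ψ Ystar s a) :=
          fun n => wnorm_nonneg' ξ hξ _
        have hq1 : q < 1 := hcontr
        have htend : Filter.Tendsto (fun n : ℕ => q ^ n * wnorm ξ (fun s a => Λ0 s a - Ψ Ystar s a))
            Filter.atTop (nhds 0) := by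
          have := (tendsto_pow_atTop_nhds_zero_of_lt_one hq0 hq1).mul_const
            (wnorm ξ (fun s a => Λ0 s a - Ψ Ystar s a))
          simpa using this
        exact squeeze_zero hw0 (fun n => hbound Λ0 n) htend }
  }
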